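/- Let θ be a categorical distribution on a finite nonempty set X and define f : ℝ → ℝ by f(α) := (1/(1−α))·log(∑_{x∈X} θ(x)^α) for α ≠ 1 and f(1) := H(θ). Then (i) for every α₀ ≠ 1, f is differentiable at α₀ with derivative −D(T(θ,α₀)||θ)/(1−α₀)²; and (ii) f is differentiable at α₀ = 1 with derivative −V(θ)/2. -/

import Mathlib

open Real BigOperators
open scoped Classical

variable {X : Type*}

/-- A categorical distribution on a finite set: positive everywhere and sums to 1. -/
def IsCatDist [Fintype X] (θ : X → ℝ) : Prop :=
  (∀ x, 0 < θ x) ∧ ∑ x, θ x = 1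

/-- The tilt of order `α` of a categorical distribution. -/
noncomputable def tilt [Fintype X] (θ : X → ℝ) (α : ℝ) : X → ℝ :=
  fun x => θ x ^ α / ∑ y, θ y ^ α

/-- Shannon entropy (natural log). -/
noncomputable def shannonEntropy [Fintype X] (ρ : X → ℝ) : ℝ :=
  ∑ x, ρ x * Real.log (1 / ρ x)

/-- Cross entropy `H(ρ‖θ)`. -/
noncomputable def crossEntropy [Fintype X] (ρ θ : X → ℝ) : ℝ :=
  ∑ x, ρ x * Real.log (1 / θ x)

/-- Relative entropy (KL divergence) `D(ρ‖θ)`. -/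
noncomputable def relEntropy [Fintype X] (ρ θ : X → ℝ) : ℝ :=
  ∑ x, ρ x * Real.log (ρ x / θ x)

/-- Rényi entropy of order `α`. -/
noncomputable def renyiEntropy [Fintype X] (θ : X → ℝ) (α : ℝ) : ℝ :=
  (1 / (1 - α)) * Real.log (∑ x, θ x ^ α)

/-- Varentropy. -/
noncomputable def varentropy [Fintype X] (ρ : X → ℝ) : ℝ :=
  ∑ x, ρ x * (Real.log (1 / ρ x) - shannonEntropy ρ) ^ 2

/-- Cross varentropy. -/
noncomputable def crossVarentropy [Fintype X] (ρ θ : X → ℝ) : ℝ :=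
  ∑ x, ρ x * (Real.log (1 / θ x) - crossEntropy ρ θ) ^ 2

/-- Probability of an `n`-string under the i.i.d. extension of `θ`. -/
noncomputable def strProb (θ : X → ℝ) {n : ℕ} (x : Fin n → X) : ℝ := ∏ i, θ (x i)

/-- Probability of a set of `n`-strings. -/
noncomputable def setProb [Fintype X] (θ : X → ℝ) {n : ℕ} (S : Finset (Fin n → X)) : ℝ :=
  ∑ x ∈ S, strProb θ x

/-- `θ` has a unique maximizer and a unique minimizer. -/
def UniqueExtremizers [Fintype X] (θ : X → ℝ) : Prop :=
  (∃! x : X, ∀ y, θ y ≤ θ x) ∧ (∃! x : X, ∀ y, θ x ≤ θ y)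

/-- Tilted weakly typical set of order `α`. -/
noncomputable def typicalSetA [Fintype X] (θ : X → ℝ) (α : ℝ) (n : ℕ) (ε : ℝ) :
    Finset (Fin n → X) :=
  Finset.univ.filter (fun x =>
    Real.exp (-(n : ℝ) * crossEntropy (tilt θ α) θ - n * ε) < strProb θ x ∧
    strProb θ x < Real.exp (-(n : ℝ) * crossEntropy (tilt θ α) θ + n * ε))

/-- The set `D^n_{θ,α,ε}`. -/
noncomputable def setD [Fintype X] (θ : X → ℝ) (α : ℝ) (n : ℕ) (ε : ℝ) :
    Finset (Fin n → X) :=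
  Finset.univ.filter (fun x =>
    strProb (tilt θ α) x > Real.exp (-(n : ℝ) * shannonEntropy (tilt θ α) - n * |α| * ε))

/-- The set `E^n_{θ,α,ε}`. -/
noncomputable def setE [Fintype X] (θ : X → ℝ) (α : ℝ) (n : ℕ) (ε : ℝ) :
    Finset (Fin n → X) :=
  Finset.univ.filter (fun x =>
    strProb (tilt θ α) x < Real.exp (-(n : ℝ) * shannonEntropy (tilt θ α) + n * |α| * ε))


section AuxLemmas

variable {X : Type*}

private lemma sum_rpow_pos [Fintype X] [Nonempty X] (θ : X → ℝ) (hθ : ∀ x, 0 < θ x) (α : ℝ) :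
    0 < ∑ x, θ x ^ α :=
  Finset.sum_pos (fun x _ => Real.rpow_pos_of_pos (hθ x) α) Finset.univ_nonempty

private lemma hasDerivAt_Z [Fintype X] (θ : X → ℝ) (hθ : ∀ x, 0 < θ x) (α : ℝ) :
    HasDerivAt (fun a : ℝ => ∑ x, θ x ^ a) (∑ x, θ x ^ α * Real.log (θ x)) α :=
  HasDerivAt.fun_sum (fun x _ => (Real.hasStrictDerivAt_const_rpow (hθ x) α).hasDerivAt)

private lemma hasDerivAt_Z' [Fintype X] (θ : X → ℝ) (hθ : ∀ x, 0 < θ x) (α : ℝ) :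
    HasDerivAt (fun a : ℝ => ∑ x, θ x ^ a * Real.log (θ x))
      (∑ x, θ x ^ α * Real.log (θ x) ^ 2) α := by
  refine HasDerivAt.fun_sum (fun x _ => ?_)
  have h := ((Real.hasStrictDerivAt_const_rpow (hθ x) α).hasDerivAt).mul_const
    (Real.log (θ x))
  refine h.congr_deriv ?_
  ring

/-- Generic derivative lemma away from 1. -/
private lemma hasDerivAt_aux1 (g g' : ℝ → ℝ) (α₀ : ℝ)
    (hg : HasDerivAt g (g' α₀) α₀) (hα₀ : (1 : ℝ) - α₀ ≠ 0) (f : ℝ → ℝ)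
    (hf : ∀ᶠ a in nhds α₀, f a = (1 - a)⁻¹ * g a) :
    HasDerivAt f (g α₀ / (1 - α₀) ^ 2 + g' α₀ / (1 - α₀)) α₀ := by
  have hd1 : HasDerivAt (fun a : ℝ => (1 - a)⁻¹) (((1 - α₀) ^ 2)⁻¹) α₀ := by
    have h := ((hasDerivAt_id α₀).const_sub 1).inv hα₀
    refine h.congr_deriv ?_
    simp only [id_eq]
    field_simp
  have hprod := hd1.mul hg
  have := hprod.congr_of_eventuallyEq hf
  refine this.congr_deriv ?_
  field_simp

/-- Generic second-derivative (difference quotient) lemma at 1. -/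
private lemma hasDerivAt_aux2 (g g' : ℝ → ℝ) (V : ℝ)
    (hg : ∀ a, HasDerivAt g (g' a) a)
    (hg' : HasDerivAt g' V 1) (hg0 : g 1 = 0) (f : ℝ → ℝ)
    (hf : ∀ a : ℝ, a ≠ 1 → f a = (1 - a)⁻¹ * g a) (hf1 : f 1 = -g' 1) :
    HasDerivAt f (-V / 2) 1 := by
  rw [hasDerivAt_iff_tendsto_slope]
  have hN : ∀ a : ℝ, HasDerivAt (fun a => -(g a - g' 1 * (a - 1)))
      (-(g' a - g' 1)) a := by
    intro a
    have h := ((hg a).sub (((hasDerivAt_id a).sub_const 1).const_mul (g' 1))).neg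
    refine h.congr_deriv ?_
    ring
  have hD : ∀ a : ℝ, HasDerivAt (fun a : ℝ => (a - 1) ^ 2) (2 * (a - 1)) a := by
    intro a
    have h := ((hasDerivAt_id a).sub_const 1).pow 2
    refine h.congr_deriv ?_
    simp only [id_eq]
    norm_num
  have key : Filter.Tendsto (fun a => -(g a - g' 1 * (a - 1)) / (a - 1) ^ 2)
      (nhdsWithin 1 {(1 : ℝ)}ᶜ) (nhds (-V / 2)) := by
    apply HasDerivAt.lhopital_zero_nhdsNE
      (f' := fun a => -(g' a - g' 1)) (g' := fun a => 2 * (a - 1))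
    · filter_upwards with a; exact hN a
    · filter_upwards with a; exact hD a
    · filter_upwards [self_mem_nhdsWithin] with a ha
      have : a - 1 ≠ 0 := sub_ne_zero.mpr ha
      exact mul_ne_zero two_ne_zero this
    · have hc := (hN 1).continuousAt.tendsto
      rw [show -(g 1 - g' 1 * ((1 : ℝ) - 1)) = 0 by rw [hg0]; ring] at hc
      exact hc.mono_left nhdsWithin_le_nhds
    · have hc := (hD 1).continuousAt.tendsto
      rw [show ((1 : ℝ) - 1) ^ 2 = 0 by ring] at hc
      exact hc.mono_left nhdsWithin_le_nhds
    · have hslope := hasDerivAt_iff_tendsto_slope.mp hg'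
      have h2 : Filter.Tendsto (fun a => -(slope g' 1 a) / 2)
          (nhdsWithin 1 {(1 : ℝ)}ᶜ) (nhds (-V / 2)) := hslope.neg.div_const 2
      refine Filter.Tendsto.congr' ?_ h2
      filter_upwards [self_mem_nhdsWithin] with a ha
      have hne : a - 1 ≠ 0 := sub_ne_zero.mpr ha
      rw [slope_def_field]
      field_simp [hne]
  refine Filter.Tendsto.congr' ?_ key
  filter_upwards [self_mem_nhdsWithin] with a ha
  have hne : a - 1 ≠ 0 := sub_ne_zero.mpr ha
  have hne' : (1 : ℝ) - a ≠ 0 := fun h => hne (by linarith)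
  rw [slope_def_field, hf a ha, hf1]
  field_simp
  ring

end AuxLemmas

/-- A guesswork function for `θ` on `n`-strings: a bijection onto `{1,…,|X|^n}`
that orders strings from most likely to least likely. -/
def IsGuesswork [Fintype X] (θ : X → ℝ) {n : ℕ} (G : (Fin n → X) → ℕ) : Prop :=
  Function.Injective G ∧
  (∀ x, G x ∈ Finset.Icc 1 (Fintype.card X ^ n)) ∧
  (∀ m ∈ Finset.Icc 1 (Fintype.card X ^ n), ∃ x, G x = m) ∧
  (∀ x y, strProb θ x > strProb θ y → G x < G y)

theorem hasDerivAt_renyi_extended [Fintype X] [Nonempty X] (θ : X → ℝ)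
    (hθ : IsCatDist θ) (f : ℝ → ℝ)
    (hf : ∀ α : ℝ, α ≠ 1 → f α = (1 / (1 - α)) * Real.log (∑ x, θ x ^ α))
    (hf1 : f 1 = shannonEntropy θ) :
    (∀ α₀ : ℝ, α₀ ≠ 1 →
      HasDerivAt f (-(relEntropy (tilt θ α₀) θ) / (1 - α₀) ^ 2) α₀) ∧
    HasDerivAt f (-(varentropy θ) / 2) 1 := by
  classical
  obtain ⟨hpos, hsum⟩ := hθ
  have hZpos : ∀ a : ℝ, 0 < ∑ x, θ x ^ a := sum_rpow_pos θ hpos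
  have hZne : ∀ a : ℝ, (∑ x, θ x ^ a) ≠ 0 := fun a => (hZpos a).ne'
  have hg : ∀ a : ℝ, HasDerivAt (fun a => Real.log (∑ x, θ x ^ a))
      ((∑ x, θ x ^ a * Real.log (θ x)) / (∑ x, θ x ^ a)) a :=
    fun a => (hasDerivAt_Z θ hpos a).log (hZne a)
  have hZone : (∑ x, θ x ^ (1 : ℝ)) = 1 := by
    simp only [Real.rpow_one]; exact hsum
  have hZ1one : (∑ x, θ x ^ (1 : ℝ) * Real.log (θ x)) = ∑ x, θ x * Real.log (θ x) := by
    simp [Real.rpow_one]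
  have hHdef : shannonEntropy θ = -∑ x, θ x * Real.log (θ x) := by
    rw [shannonEntropy, ← Finset.sum_neg_distrib]
    refine Finset.sum_congr rfl fun x _ => ?_
    rw [one_div, Real.log_inv]
    ring
  have hrel : ∀ a : ℝ, relEntropy (tilt θ a) θ
      = (a - 1) * ((∑ x, θ x ^ a * Real.log (θ x)) / (∑ x, θ x ^ a))
        - Real.log (∑ x, θ x ^ a) := by
    intro a
    have hterm : ∀ x : X, tilt θ a x * Real.log (tilt θ a x / θ x)
        = (a - 1) / (∑ y, θ y ^ a) * (θ x ^ a * Real.log (θ x))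
          - Real.log (∑ y, θ y ^ a) / (∑ y, θ y ^ a) * θ x ^ a := by
      intro x
      have hx := hpos x
      have h1 : tilt θ a x = θ x ^ a / ∑ y, θ y ^ a := rfl
      have h2 : Real.log (θ x ^ a / (∑ y, θ y ^ a) / θ x)
          = a * Real.log (θ x) - Real.log (∑ y, θ y ^ a) - Real.log (θ x) := by
        rw [Real.log_div (div_pos (Real.rpow_pos_of_pos hx a) (hZpos a)).ne' hx.ne',
          Real.log_div (Real.rpow_pos_of_pos hx a).ne' (hZne a), Real.log_rpow hx]
      rw [h1, h2]
      ring
    rw [relEntropy, Finset.sum_congr rfl fun x _ => hterm x, Finset.sum_sub_distrib,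
      ← Finset.mul_sum, ← Finset.mul_sum]
    rw [div_mul_cancel₀ _ (hZne a)]
    ring
  constructor
  · intro α₀ hα₀
    have h1ne : (1 : ℝ) - α₀ ≠ 0 := sub_ne_zero.mpr (Ne.symm hα₀)
    have heq : ∀ᶠ a in nhds α₀, f a = (1 - a)⁻¹ * Real.log (∑ x, θ x ^ a) := by
      filter_upwards [isOpen_ne.mem_nhds hα₀] with a ha
      rw [hf a ha, one_div]
    have hder := hasDerivAt_aux1 (fun a => Real.log (∑ x, θ x ^ a))
      (fun a => (∑ x, θ x ^ a * Real.log (θ x)) / (∑ x, θ x ^ a)) α₀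
      (hg α₀) h1ne f heq
    convert hder using 1
    rw [hrel α₀]
    field_simp [hZne α₀]
    ring
  · have hgd : ∀ a : ℝ, HasDerivAt
        (fun a => (∑ x, θ x ^ a * Real.log (θ x)) / (∑ x, θ x ^ a))
        (((∑ x, θ x ^ a * Real.log (θ x) ^ 2) * (∑ x, θ x ^ a)
          - (∑ x, θ x ^ a * Real.log (θ x)) * (∑ x, θ x ^ a * Real.log (θ x)))
            / (∑ x, θ x ^ a) ^ 2) a :=
      fun a => (hasDerivAt_Z' θ hpos a).div (hasDerivAt_Z θ hpos a) (hZne a)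
    have hV : varentropy θ
        = (∑ x, θ x * Real.log (θ x) ^ 2) - (∑ x, θ x * Real.log (θ x)) ^ 2 := by
      rw [varentropy]
      have hterm : ∀ x : X, θ x * (Real.log (1 / θ x) - shannonEntropy θ) ^ 2
          = θ x * Real.log (θ x) ^ 2
            - 2 * (∑ y, θ y * Real.log (θ y)) * (θ x * Real.log (θ x))
            + (∑ y, θ y * Real.log (θ y)) ^ 2 * θ x := by
        intro x
        rw [hHdef, one_div, Real.log_inv]
        ring
      rw [Finset.sum_congr rfl fun x _ => hterm x, Finset.sum_add_distrib,
        Finset.sum_sub_distrib, ← Finset.mul_sum, ← Finset.mul_sum, hsum]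
      ring
    have hgd1 : HasDerivAt
        (fun a : ℝ => (∑ x, θ x ^ a * Real.log (θ x)) / (∑ x, θ x ^ a))
        (varentropy θ) 1 := by
      have h := hgd 1
      have h2 : ((∑ x, θ x ^ (1:ℝ) * Real.log (θ x) ^ 2) * (∑ x, θ x ^ (1:ℝ))
          - (∑ x, θ x ^ (1:ℝ) * Real.log (θ x)) * (∑ x, θ x ^ (1:ℝ) * Real.log (θ x)))
            / (∑ x, θ x ^ (1:ℝ)) ^ 2 = varentropy θ := by
        rw [hZone, hZ1one, hV, show (∑ x, θ x ^ (1:ℝ) * Real.log (θ x) ^ 2)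
          = ∑ x, θ x * Real.log (θ x) ^ 2 by simp [Real.rpow_one]]
        ring
      rwa [h2] at h
    refine hasDerivAt_aux2 (fun a => Real.log (∑ x, θ x ^ a))
      (fun a => (∑ x, θ x ^ a * Real.log (θ x)) / (∑ x, θ x ^ a))
      (varentropy θ) hg hgd1 ?_ f (fun a ha => by rw [hf a ha, one_div]) ?_
    · simp only [hZone, Real.log_one]
    · rw [hf1, hHdef]
      simp only [hZ1one, hZone, div_one]
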